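/- Let R be a natural number and let u, v : ℝ² → ℝ be the polynomial functions u(x,y) = Σ_{r=0}^{R} Σ_{s=0}^{r} a_r^s x^{r-s} y^s and v(x,y) = Σ_{r=0}^{R} Σ_{s=0}^{r} A_r^s x^{r-s} y^s with real coefficients satisfying the Cauchy–Riemann equations (∂u/∂x = ∂v/∂y and ∂u/∂y = −∂v/∂x identically on ℝ²). Then for every 1 ≤ r ≤ R and every 0 ≤ s ≤ r: if s is odd then A_r^s = (−1)^{(s−1)/2} · C(r,s) · a_r^0, and if s is even then A_r^s = −(−1)^{s/2} · (1/r) · C(r,s) · a_r^1, where C(r,s) is the binomial coefficient. -/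

import Mathlib

lemma one_var {N : ℕ} {c : ℕ → ℝ} (h : ∀ x : ℝ, ∑ n ∈ Finset.range N, c n * x ^ n = 0)
    {n : ℕ} (hn : n < N) : c n = 0 := by
  have hp : (∑ m ∈ Finset.range N, Polynomial.C (c m) * Polynomial.X ^ m : Polynomial ℝ) = 0 := by
    apply Polynomial.funext
    intro x
    simpa [Polynomial.eval_finset_sum] using h x
  have h2 := congrArg (fun p => Polynomial.coeff p n) hp
  simpa [Polynomial.finset_sum_coeff, Polynomial.coeff_C_mul, Polynomial.coeff_X_pow,
    Finset.sum_ite_eq' (Finset.range N), Finset.mem_range, hn] using h2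

lemma two_var {M N : ℕ} {c : ℕ → ℕ → ℝ}
    (h : ∀ x y : ℝ, ∑ m ∈ Finset.range M, ∑ n ∈ Finset.range N, c m n * x ^ m * y ^ n = 0)
    {m n : ℕ} (hm : m < M) (hn : n < N) : c m n = 0 := by
  have key : ∀ y : ℝ, ∑ n ∈ Finset.range N, c m n * y ^ n = 0 := by
    intro y
    have h1 : ∀ x : ℝ, ∑ m ∈ Finset.range M, (∑ n ∈ Finset.range N, c m n * y ^ n) * x ^ m = 0 := by
      intro x
      rw [← h x y]
      refine Finset.sum_congr rfl fun i _ => ?_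
      rw [Finset.sum_mul]
      exact Finset.sum_congr rfl fun j _ => by ring
    exact one_var h1 hm
  exact one_var key hn

lemma tri_rect (R : ℕ) (G : ℕ → ℕ → ℝ) (hG : ∀ r, G r r = 0) (x y : ℝ) :
    ∑ r ∈ Finset.range (R+1), ∑ s ∈ Finset.range (r+1), G r s * x ^ (r - s - 1) * y ^ s
    = ∑ m ∈ Finset.range (R+1), ∑ n ∈ Finset.range (R+1),
        (if m + n + 1 ≤ R then G (m+n+1) n else 0) * x ^ m * y ^ n := by
  have lhs_eq : ∑ r ∈ Finset.range (R+1), ∑ s ∈ Finset.range (r+1), G r s * x ^ (r - s - 1) * y ^ s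
      = ∑ r ∈ Finset.range R, ∑ s ∈ Finset.range (r+1), G (r+1) s * x ^ (r - s) * y ^ s := by
    rw [Finset.sum_range_succ']
    have h0 : ∑ s ∈ Finset.range (0+1), G 0 s * x ^ (0 - s - 1) * y ^ s = 0 := by
      simp [hG]
    rw [h0, add_zero]
    apply Finset.sum_congr rfl
    intro r _
    rw [Finset.sum_range_succ, hG]
    simp [Nat.succ_sub_succ, Nat.sub_sub]
  rw [lhs_eq]
  have rhs_eq : ∑ m ∈ Finset.range (R+1), ∑ n ∈ Finset.range (R+1),
        (if m + n + 1 ≤ R then G (m+n+1) n else 0) * x ^ m * y ^ n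
      = ∑ p ∈ (Finset.range (R+1) ×ˢ Finset.range (R+1)).filter (fun p => p.1+p.2+1 ≤ R),
          G (p.1+p.2+1) p.2 * x ^ p.1 * y ^ p.2 := by
    rw [Finset.sum_filter, Finset.sum_product]
    apply Finset.sum_congr rfl; intro m _
    apply Finset.sum_congr rfl; intro n _
    by_cases h : m + n + 1 ≤ R <;> simp [h]
  rw [rhs_eq, Finset.sum_sigma']
  refine Finset.sum_nbij' (fun p => (p.1 - p.2, p.2)) (fun q => ⟨q.1 + q.2, q.2⟩) ?_ ?_ ?_ ?_ ?_
  · rintro ⟨r, s⟩ hp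
    simp only [Finset.mem_sigma, Finset.mem_range] at hp
    simp only [Finset.mem_filter, Finset.mem_product, Finset.mem_range]
    omega
  · rintro ⟨m, n⟩ hq
    simp only [Finset.mem_filter, Finset.mem_product, Finset.mem_range] at hq
    simp only [Finset.mem_sigma, Finset.mem_range]
    omega
  · rintro ⟨r, s⟩ hp
    simp only [Finset.mem_sigma, Finset.mem_range] at hp
    have : s ≤ r := by omega
    simp [Nat.sub_add_cancel this]
  · rintro ⟨m, n⟩ _
    simp
  · rintro ⟨r, s⟩ hp
    simp only [Finset.mem_sigma, Finset.mem_range] at hp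
    have hs : s ≤ r := by omega
    simp [Nat.sub_add_cancel hs]

lemma shapeB_rect (R : ℕ) (H : ℕ → ℕ → ℝ) (hH : ∀ r, H r 0 = 0) (x y : ℝ) :
    ∑ r ∈ Finset.range (R+1), ∑ s ∈ Finset.range (r+1), H r s * x ^ (r - s) * y ^ (s - 1)
    = ∑ m ∈ Finset.range (R+1), ∑ n ∈ Finset.range (R+1),
        (if m + n + 1 ≤ R then H (m+n+1) (n+1) else 0) * x ^ m * y ^ n := by
  have step1 : ∑ r ∈ Finset.range (R+1), ∑ s ∈ Finset.range (r+1), H r s * x ^ (r - s) * y ^ (s - 1)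
      = ∑ r ∈ Finset.range (R+1), ∑ j ∈ Finset.range (r+1), H r (r - j) * y ^ (r - j - 1) * x ^ j := by
    apply Finset.sum_congr rfl
    intro r _
    rw [← Finset.sum_range_reflect]
    apply Finset.sum_congr rfl
    intro j hj
    have hjr : j ≤ r := by
      have := Finset.mem_range.mp hj; omega
    have h1 : r + 1 - 1 - j = r - j := by omega
    rw [h1, Nat.sub_sub_self hjr]
    ring
  rw [step1]
  have step2 := tri_rect R (fun r j => H r (r - j)) (fun r => by simp [hH]) y x
  rw [step2, Finset.sum_comm]
  apply Finset.sum_congr rfl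
  intro m _
  apply Finset.sum_congr rfl
  intro n _
  by_cases h : m + n + 1 ≤ R
  · have h' : n + m + 1 ≤ R := by omega
    rw [if_pos h, if_pos h']
    have h2 : n + m + 1 - m = n + 1 := by omega
    rw [h2]
    ring
  · have h' : ¬ (n + m + 1 ≤ R) := by omega
    rw [if_neg h, if_neg h']
    ring

lemma deriv_dsum (N : ℕ) (f : ℕ → ℕ → ℝ) (e : ℕ → ℕ → ℕ) (x : ℝ) :
    deriv (fun t => ∑ r ∈ Finset.range N, ∑ s ∈ Finset.range (r+1), f r s * t ^ e r s) x
    = ∑ r ∈ Finset.range N, ∑ s ∈ Finset.range (r+1), f r s * (e r s : ℝ) * x ^ (e r s - 1) := by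
  have hd : ∀ (r s : ℕ), DifferentiableAt ℝ (fun t : ℝ => f r s * t ^ e r s) x :=
    fun r s => (differentiableAt_pow _).const_mul _
  rw [deriv_fun_sum (fun r _ => DifferentiableAt.fun_sum (fun s _ => hd r s))]
  apply Finset.sum_congr rfl
  intro r _
  rw [deriv_fun_sum (fun s _ => hd r s)]
  apply Finset.sum_congr rfl
  intro s _
  rw [deriv_const_mul _ (differentiableAt_pow _), deriv_pow_field]
  ring



/-- Under the Cauchy–Riemann equations, for `1 ≤ r ≤ R` and
`0 ≤ s ≤ r`: if `s` is odd then `A_r^s = (−1)^{(s−1)/2}·C(r,s)·a_r^0`, and if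
`s` is even then `A_r^s = −(−1)^{s/2}·(1/r)·C(r,s)·a_r^1`. -/
theorem stmt_5 (R : ℕ) (a A : ℕ → ℕ → ℝ) (u v : ℝ → ℝ → ℝ)
    (hu : ∀ x y : ℝ, u x y =
      ∑ r ∈ Finset.range (R + 1), ∑ s ∈ Finset.range (r + 1),
        a r s * x ^ (r - s) * y ^ s)
    (hv : ∀ x y : ℝ, v x y =
      ∑ r ∈ Finset.range (R + 1), ∑ s ∈ Finset.range (r + 1),
        A r s * x ^ (r - s) * y ^ s)
    (hCR1 : ∀ x y : ℝ, deriv (fun t => u t y) x = deriv (fun t => v x t) y)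
    (hCR2 : ∀ x y : ℝ, deriv (fun t => u x t) y = - deriv (fun t => v t y) x) :
    ∀ r s : ℕ, 1 ≤ r → r ≤ R → s ≤ r →
      (Odd s → A r s = (-1 : ℝ) ^ ((s - 1) / 2) * (r.choose s : ℝ) * a r 0) ∧
      (Even s → A r s = -((-1 : ℝ) ^ (s / 2)) * (1 / (r : ℝ)) * (r.choose s : ℝ) * a r 1) := by
    -- derivative formulas
  have hux : ∀ x y : ℝ, deriv (fun t => u t y) x
      = ∑ r ∈ Finset.range (R+1), ∑ s ∈ Finset.range (r+1),
          (a r s * ((r - s : ℕ) : ℝ)) * x ^ (r - s - 1) * y ^ s := by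
    intro x y
    have hfun : (fun t => u t y) = fun t => ∑ r ∈ Finset.range (R+1), ∑ s ∈ Finset.range (r+1),
        (a r s * y ^ s) * t ^ (r - s) := by
      funext t; rw [hu]
      exact Finset.sum_congr rfl fun r _ => Finset.sum_congr rfl fun s _ => by ring
    rw [hfun, deriv_dsum]
    exact Finset.sum_congr rfl fun r _ => Finset.sum_congr rfl fun s _ => by ring
  have hvy : ∀ x y : ℝ, deriv (fun t => v x t) y
      = ∑ r ∈ Finset.range (R+1), ∑ s ∈ Finset.range (r+1),
          ((s : ℝ) * A r s) * x ^ (r - s) * y ^ (s - 1) := by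
    intro x y
    have hfun : (fun t => v x t) = fun t => ∑ r ∈ Finset.range (R+1), ∑ s ∈ Finset.range (r+1),
        (A r s * x ^ (r - s)) * t ^ s := by
      funext t; rw [hv]
    rw [hfun, deriv_dsum]
    exact Finset.sum_congr rfl fun r _ => Finset.sum_congr rfl fun s _ => by ring
  have huy : ∀ x y : ℝ, deriv (fun t => u x t) y
      = ∑ r ∈ Finset.range (R+1), ∑ s ∈ Finset.range (r+1),
          ((s : ℝ) * a r s) * x ^ (r - s) * y ^ (s - 1) := by
    intro x y
    have hfun : (fun t => u x t) = fun t => ∑ r ∈ Finset.range (R+1), ∑ s ∈ Finset.range (r+1),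
        (a r s * x ^ (r - s)) * t ^ s := by
      funext t; rw [hu]
    rw [hfun, deriv_dsum]
    exact Finset.sum_congr rfl fun r _ => Finset.sum_congr rfl fun s _ => by ring
  have hvx : ∀ x y : ℝ, deriv (fun t => v t y) x
      = ∑ r ∈ Finset.range (R+1), ∑ s ∈ Finset.range (r+1),
          (A r s * ((r - s : ℕ) : ℝ)) * x ^ (r - s - 1) * y ^ s := by
    intro x y
    have hfun : (fun t => v t y) = fun t => ∑ r ∈ Finset.range (R+1), ∑ s ∈ Finset.range (r+1),
        (A r s * y ^ s) * t ^ (r - s) := by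
      funext t; rw [hv]
      exact Finset.sum_congr rfl fun r _ => Finset.sum_congr rfl fun s _ => by ring
    rw [hfun, deriv_dsum]
    exact Finset.sum_congr rfl fun r _ => Finset.sum_congr rfl fun s _ => by ring
  -- coefficient relations
  have rel1 : ∀ m n : ℕ, m + n + 1 ≤ R →
      ((m : ℝ) + 1) * a (m+n+1) n = ((n : ℝ) + 1) * A (m+n+1) (n+1) := by
    intro m n hmn
    have hzero : ∀ x y : ℝ, ∑ m ∈ Finset.range (R+1), ∑ n ∈ Finset.range (R+1),
        ((if m + n + 1 ≤ R then a (m+n+1) n * (((m+n+1) - n : ℕ) : ℝ) else 0)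
          - (if m + n + 1 ≤ R then ((n+1 : ℕ) : ℝ) * A (m+n+1) (n+1) else 0)) * x ^ m * y ^ n = 0 := by
      intro x y
      have e1 : ∑ r ∈ Finset.range (R+1), ∑ s ∈ Finset.range (r+1),
            (a r s * ((r - s : ℕ) : ℝ)) * x ^ (r - s - 1) * y ^ s
          = ∑ m ∈ Finset.range (R+1), ∑ n ∈ Finset.range (R+1),
            (if m + n + 1 ≤ R then a (m+n+1) n * (((m+n+1) - n : ℕ) : ℝ) else 0) * x ^ m * y ^ n :=
        tri_rect R (fun r s => a r s * ((r - s : ℕ) : ℝ)) (fun r => by simp) x y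
      have e2 : ∑ r ∈ Finset.range (R+1), ∑ s ∈ Finset.range (r+1),
            ((s : ℝ) * A r s) * x ^ (r - s) * y ^ (s - 1)
          = ∑ m ∈ Finset.range (R+1), ∑ n ∈ Finset.range (R+1),
            (if m + n + 1 ≤ R then ((n+1 : ℕ) : ℝ) * A (m+n+1) (n+1) else 0) * x ^ m * y ^ n :=
        shapeB_rect R (fun r s => (s : ℝ) * A r s) (fun r => by simp) x y
      have hCR := hCR1 x y
      rw [hux x y, hvy x y, e1, e2] at hCR
      have expand : ∑ m ∈ Finset.range (R+1), ∑ n ∈ Finset.range (R+1),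
          ((if m + n + 1 ≤ R then a (m+n+1) n * (((m+n+1) - n : ℕ) : ℝ) else 0)
            - (if m + n + 1 ≤ R then ((n+1 : ℕ) : ℝ) * A (m+n+1) (n+1) else 0)) * x ^ m * y ^ n
          = (∑ m ∈ Finset.range (R+1), ∑ n ∈ Finset.range (R+1),
              (if m + n + 1 ≤ R then a (m+n+1) n * (((m+n+1) - n : ℕ) : ℝ) else 0) * x ^ m * y ^ n)
            - ∑ m ∈ Finset.range (R+1), ∑ n ∈ Finset.range (R+1),
              (if m + n + 1 ≤ R then ((n+1 : ℕ) : ℝ) * A (m+n+1) (n+1) else 0) * x ^ m * y ^ n := by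
        rw [← Finset.sum_sub_distrib]
        apply Finset.sum_congr rfl; intro i _
        rw [← Finset.sum_sub_distrib]
        exact Finset.sum_congr rfl fun j _ => by ring
      rw [expand, hCR, sub_self]
    have := two_var hzero (show m < R + 1 by omega) (show n < R + 1 by omega)
    rw [if_pos hmn, if_pos hmn] at this
    have h1 : (m+n+1) - n = m + 1 := by omega
    rw [h1] at this
    push_cast at this
    linarith
  have rel2 : ∀ m n : ℕ, m + n + 1 ≤ R →
      ((n : ℝ) + 1) * a (m+n+1) (n+1) = -(((m : ℝ) + 1) * A (m+n+1) n) := by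
    intro m n hmn
    have hzero : ∀ x y : ℝ, ∑ m ∈ Finset.range (R+1), ∑ n ∈ Finset.range (R+1),
        ((if m + n + 1 ≤ R then ((n+1 : ℕ) : ℝ) * a (m+n+1) (n+1) else 0)
          + (if m + n + 1 ≤ R then A (m+n+1) n * (((m+n+1) - n : ℕ) : ℝ) else 0)) * x ^ m * y ^ n = 0 := by
      intro x y
      have e1 : ∑ r ∈ Finset.range (R+1), ∑ s ∈ Finset.range (r+1),
            ((s : ℝ) * a r s) * x ^ (r - s) * y ^ (s - 1)
          = ∑ m ∈ Finset.range (R+1), ∑ n ∈ Finset.range (R+1),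
            (if m + n + 1 ≤ R then ((n+1 : ℕ) : ℝ) * a (m+n+1) (n+1) else 0) * x ^ m * y ^ n :=
        shapeB_rect R (fun r s => (s : ℝ) * a r s) (fun r => by simp) x y
      have e2 : ∑ r ∈ Finset.range (R+1), ∑ s ∈ Finset.range (r+1),
            (A r s * ((r - s : ℕ) : ℝ)) * x ^ (r - s - 1) * y ^ s
          = ∑ m ∈ Finset.range (R+1), ∑ n ∈ Finset.range (R+1),
            (if m + n + 1 ≤ R then A (m+n+1) n * (((m+n+1) - n : ℕ) : ℝ) else 0) * x ^ m * y ^ n :=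
        tri_rect R (fun r s => A r s * ((r - s : ℕ) : ℝ)) (fun r => by simp) x y
      have hCR := hCR2 x y
      rw [huy x y, hvx x y, e1, e2] at hCR
      have expand : ∑ m ∈ Finset.range (R+1), ∑ n ∈ Finset.range (R+1),
          ((if m + n + 1 ≤ R then ((n+1 : ℕ) : ℝ) * a (m+n+1) (n+1) else 0)
            + (if m + n + 1 ≤ R then A (m+n+1) n * (((m+n+1) - n : ℕ) : ℝ) else 0)) * x ^ m * y ^ n
          = (∑ m ∈ Finset.range (R+1), ∑ n ∈ Finset.range (R+1),
              (if m + n + 1 ≤ R then ((n+1 : ℕ) : ℝ) * a (m+n+1) (n+1) else 0) * x ^ m * y ^ n)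
            + ∑ m ∈ Finset.range (R+1), ∑ n ∈ Finset.range (R+1),
              (if m + n + 1 ≤ R then A (m+n+1) n * (((m+n+1) - n : ℕ) : ℝ) else 0) * x ^ m * y ^ n := by
        rw [← Finset.sum_add_distrib]
        apply Finset.sum_congr rfl; intro i _
        rw [← Finset.sum_add_distrib]
        exact Finset.sum_congr rfl fun j _ => by ring
      rw [expand, hCR]
      ring
    have := two_var hzero (show m < R + 1 by omega) (show n < R + 1 by omega)
    rw [if_pos hmn, if_pos hmn] at this
    have h1 : (m+n+1) - n = m + 1 := by omega
    rw [h1] at this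
    push_cast at this
    linarith
  -- specialized recurrences
  have key1 : ∀ r s : ℕ, 1 ≤ s → s ≤ r → r ≤ R →
      (s : ℝ) * A r s = ((r : ℝ) - s + 1) * a r (s-1) := by
    intro r s hs hsr hrR
    have h := rel1 (r - s) (s - 1) (by omega)
    have h1 : (r - s) + (s - 1) + 1 = r := by omega
    have h2 : (s - 1) + 1 = s := by omega
    rw [h1, h2] at h
    rw [Nat.cast_sub hsr, Nat.cast_sub hs] at h
    push_cast at h
    linarith
  have key2 : ∀ r s : ℕ, 1 ≤ s → s ≤ r → r ≤ R →
      (s : ℝ) * a r s = -(((r : ℝ) - s + 1) * A r (s-1)) := by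
    intro r s hs hsr hrR
    have h := rel2 (r - s) (s - 1) (by omega)
    have h1 : (r - s) + (s - 1) + 1 = r := by omega
    have h2 : (s - 1) + 1 = s := by omega
    rw [h1, h2] at h
    rw [Nat.cast_sub hsr, Nat.cast_sub hs] at h
    push_cast at h
    linarith
  -- main induction
  intro r s hr hrR
  have hrne : (r : ℝ) ≠ 0 := by positivity
  induction s using Nat.twoStepInduction with
  | zero =>
    intro _
    constructor
    · intro hodd; exact absurd hodd (by simp)
    · intro _
      have h := key2 r 1 le_rfl hr hrR
      simp only [Nat.cast_one, pow_zero] at h ⊢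
      rw [Nat.choose_zero_right]
      field_simp
      linarith
  | one =>
    intro _
    constructor
    · intro _
      have h := key1 r 1 le_rfl hr hrR
      simp only [Nat.cast_one] at h
      rw [Nat.choose_one_right]
      norm_num
      linarith
    · intro heven; exact absurd heven (by simp)
  | more s ih _ =>
    intro hs2
    have ihs := ih (by omega)
    have e1 : ((s : ℝ) + 2) * A r (s+2) = ((r : ℝ) - (s+2) + 1) * a r (s+1) := by
      have := key1 r (s+2) (by omega) hs2 hrR
      have h1 : s + 2 - 1 = s + 1 := by omega
      rw [h1] at this
      push_cast at this
      linarith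
    have e2 : ((s : ℝ) + 1) * a r (s+1) = -(((r : ℝ) - (s+1) + 1) * A r s) := by
      have := key2 r (s+1) (by omega) (by omega) hrR
      have h1 : s + 1 - 1 = s := by omega
      rw [h1] at this
      push_cast at this
      linarith
    have hA : (((s : ℝ) + 2) * ((s : ℝ) + 1)) * A r (s+2)
        = -((((r : ℝ) - s - 1) * ((r : ℝ) - s)) * A r s) := by
      linear_combination ((s : ℝ) + 1) * e1 + ((r : ℝ) - s - 1) * e2
    have hch : ((s : ℝ) + 2) * ((s : ℝ) + 1) * (r.choose (s+2) : ℝ)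
        = ((r : ℝ) - s - 1) * ((r : ℝ) - s) * (r.choose s : ℝ) := by
      have n1 := Nat.choose_succ_right_eq r (s+1)
      have n2 := Nat.choose_succ_right_eq r s
      have c1 : (r.choose (s+2) : ℝ) * ((s : ℝ) + 2) = (r.choose (s+1) : ℝ) * ((r : ℝ) - s - 1) := by
        have := congrArg (fun k : ℕ => (k : ℝ)) n1
        push_cast [Nat.cast_sub (show s + 1 ≤ r by omega)] at this
        push_cast
        linarith
      have c2 : (r.choose (s+1) : ℝ) * ((s : ℝ) + 1) = (r.choose s : ℝ) * ((r : ℝ) - s) := by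
        have := congrArg (fun k : ℕ => (k : ℝ)) n2
        push_cast [Nat.cast_sub (show s ≤ r by omega)] at this
        push_cast
        linarith
      linear_combination ((s : ℝ) + 1) * c1 + ((r : ℝ) - s - 1) * c2
    have hne : (((s : ℝ) + 2) * ((s : ℝ) + 1)) ≠ 0 := by positivity
    constructor
    · intro hodd
      have hsodd : Odd s := by
        rw [Nat.odd_iff] at hodd ⊢; omega
      have hs1 : 1 ≤ s := by
        rcases hsodd with ⟨k, hk⟩; omega
      have ihA := (ihs.1) hsodd
      have hdiv : (s + 2 - 1) / 2 = (s - 1) / 2 + 1 := by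
        rw [Nat.odd_iff] at hsodd; omega
      rw [hdiv, pow_succ]
      apply mul_left_cancel₀ hne
      rw [hA, ihA]
      linear_combination (-(1 : ℝ)) ^ ((s - 1) / 2) * a r 0 * hch
    · intro heven
      have hseven : Even s := by
        rw [Nat.even_iff] at heven ⊢; omega
      have ihA := (ihs.2) hseven
      have hdiv : (s + 2) / 2 = s / 2 + 1 := by omega
      rw [hdiv, pow_succ]
      apply mul_left_cancel₀ hne
      rw [hA, ihA]
      linear_combination -((-(1 : ℝ)) ^ (s / 2)) * (1 / (r : ℝ)) * a r 1 * hch
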